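/- A lattice triangle in ℝ² has area strictly greater than 1/2 if and only if it contains a lattice point other than its three vertices (either on its boundary or in its interior). -/

import Mathlib

open MeasureTheory

theorem mem_tri {E : Type*} [AddCommGroup E] [Module ℝ E] (A B C x : E) :
    x ∈ convexHull ℝ ({A, B, C} : Set E) ↔
      ∃ β γ : ℝ, 0 ≤ β ∧ 0 ≤ γ ∧ β + γ ≤ 1 ∧ x = A + β • (B - A) + γ • (C - A) := by
  constructor
  · intro hx
    have : convexHull ℝ ({A, B, C} : Set E) ⊆
        {x | ∃ β γ : ℝ, 0 ≤ β ∧ 0 ≤ γ ∧ β + γ ≤ 1 ∧ x = A + β • (B - A) + γ • (C - A)} := by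
      apply convexHull_min
      · rintro y (rfl | rfl | rfl)
        · exact ⟨0, 0, le_refl _, le_refl _, by norm_num, by simp⟩
        · exact ⟨1, 0, by norm_num, le_refl _, by norm_num, by simp⟩
        · exact ⟨0, 1, le_refl _, by norm_num, by norm_num, by simp⟩
      · rintro y ⟨β₁, γ₁, hβ₁, hγ₁, hs₁, rfl⟩ z ⟨β₂, γ₂, hβ₂, hγ₂, hs₂, rfl⟩ s t hs ht hst
        refine ⟨s * β₁ + t * β₂, s * γ₁ + t * γ₂, by positivity, by positivity, ?_, ?_⟩
        · nlinarith
        · match_scalars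
          · linear_combination hst
          · ring
          · ring
    exact this hx
  · rintro ⟨β, γ, hβ, hγ, hs, rfl⟩
    have key : (Finset.univ : Finset (Fin 3)).centerMass ![1 - β - γ, β, γ] ![A, B, C]
        ∈ convexHull ℝ ({A, B, C} : Set E) := by
      apply Finset.centerMass_mem_convexHull
      · intro i _
        fin_cases i <;> simp <;> linarith
      · rw [Fin.sum_univ_three]
        simp only [Matrix.cons_val_zero, Matrix.cons_val_one, Matrix.head_cons, Matrix.cons_val_two, Matrix.tail_cons]
        linarith
      · intro i _
        fin_cases i <;> simp
    rw [Finset.centerMass_eq_of_sum_1] at key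
    · convert key using 1
      rw [Fin.sum_univ_three]
      simp only [Matrix.cons_val_zero, Matrix.cons_val_one, Matrix.head_cons,
        Matrix.cons_val_two, Matrix.tail_cons]
      match_scalars <;> ring
    · rw [Fin.sum_univ_three]
      simp only [Matrix.cons_val_zero, Matrix.cons_val_one, Matrix.head_cons, Matrix.cons_val_two, Matrix.tail_cons]
      ring
open MeasureTheory

theorem collinear_of_det_zero (A B C : ℝ × ℝ)
    (h : (B.1 - A.1) * (C.2 - A.2) - (B.2 - A.2) * (C.1 - A.1) = 0) :
    Collinear ℝ ({A, B, C} : Set (ℝ × ℝ)) := by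
  by_cases hBA : B = A
  · rw [hBA]
    simp only [Set.insert_comm, Set.insert_idem, Set.pair_comm]
    exact (collinear_pair ℝ C A).subset (by intro x hx; simpa [Set.pair_comm] using hx)
  · rw [collinear_iff_exists_forall_eq_smul_vadd]
    refine ⟨A, B - A, ?_⟩
    rintro x (rfl | rfl | rfl)
    · exact ⟨0, by simp⟩
    · exact ⟨1, by simp⟩
    · by_cases h1 : B.1 - A.1 ≠ 0
      · refine ⟨(x.1 - A.1) / (B.1 - A.1), ?_⟩
        simp only [vadd_eq_add, Prod.ext_iff, Prod.fst_add, Prod.snd_add, Prod.smul_fst,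
          Prod.smul_snd, Prod.fst_sub, Prod.snd_sub, smul_eq_mul]
        constructor
        · field_simp; ring
        · field_simp
          linarith [h]
      · push_neg at h1
        have h2 : B.2 - A.2 ≠ 0 := by
          intro h2
          exact hBA (by ext <;> [linarith [h1]; linarith [h2]])
        have h3 : x.1 - A.1 = 0 := by
          rw [h1] at h
          simp at h
          rcases h with h' | h'
          · exact absurd h' h2
          · exact h'
        refine ⟨(x.2 - A.2) / (B.2 - A.2), ?_⟩
        simp only [vadd_eq_add, Prod.ext_iff, Prod.fst_add, Prod.snd_add, Prod.smul_fst,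
          Prod.smul_snd, Prod.fst_sub, Prod.snd_sub, smul_eq_mul]
        constructor
        · rw [h1]
          simp
          linarith [h3]
        · field_simp; ring

def Tri : Set (ℝ × ℝ) := {p | 0 ≤ p.1 ∧ 0 ≤ p.2 ∧ p.1 + p.2 ≤ 1}

theorem tri_measurable : MeasurableSet Tri := by
  unfold Tri
  apply MeasurableSet.inter
  · exact measurableSet_le measurable_const measurable_fst
  apply MeasurableSet.inter
  · exact measurableSet_le measurable_const measurable_snd
  · exact measurableSet_le (measurable_fst.add measurable_snd) measurable_const

theorem tri_volume : volume Tri = ENNReal.ofReal (1/2) := by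
  rw [Measure.volume_eq_prod, Measure.prod_apply tri_measurable]
  have hsec : ∀ x : ℝ, (Prod.mk x ⁻¹' Tri) =
      if x ∈ Set.Icc (0:ℝ) 1 then Set.Icc 0 (1 - x) else ∅ := by
    intro x
    ext y
    simp only [Tri, Set.mem_preimage, Set.mem_setOf_eq, Set.mem_Icc]
    split_ifs with hx
    · simp only [Set.mem_Icc]
      constructor
      · rintro ⟨h1, h2, h3⟩; exact ⟨h2, by linarith⟩
      · rintro ⟨h1, h2⟩
        exact ⟨hx.1, h1, by linarith⟩
    · simp only [Set.mem_empty_iff_false, iff_false]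
      rintro ⟨h1, h2, h3⟩
      simp only [Set.mem_Icc, not_and_or, not_le] at hx
      rcases hx with hx | hx <;> linarith
  have : (fun x => volume (Prod.mk x ⁻¹' Tri)) =
      (Set.Icc (0:ℝ) 1).indicator (fun x => ENNReal.ofReal (1 - x)) := by
    funext x
    rw [hsec x]
    by_cases hx : x ∈ Set.Icc (0:ℝ) 1
    · rw [if_pos hx, Set.indicator_of_mem hx, Real.volume_Icc]
      norm_num
    · rw [if_neg hx, Set.indicator_of_notMem hx, measure_empty]
  rw [show ∫⁻ x, volume (Prod.mk x ⁻¹' Tri) = ∫⁻ x, (Set.Icc (0:ℝ) 1).indicator (fun x => ENNReal.ofReal (1 - x)) x from by rw [← this]]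
  rw [lintegral_indicator measurableSet_Icc]
  rw [← ofReal_integral_eq_lintegral_ofReal]
  · congr 1
    rw [MeasureTheory.integral_Icc_eq_integral_Ioc,
      ← intervalIntegral.integral_of_le (by norm_num : (0:ℝ) ≤ 1)]
    rw [intervalIntegral.integral_sub (intervalIntegrable_const (c := (1:ℝ)))
      intervalIntegral.intervalIntegrable_id]
    simp [integral_id]
    norm_num
  · exact (continuous_const.sub continuous_id).integrableOn_Icc
  · filter_upwards [self_mem_ae_restrict measurableSet_Icc] with x hx
    simp only [Set.mem_Icc] at hx
    simp only [Pi.zero_apply]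
    linarith [hx.2]

noncomputable def Lmap (u v : ℝ × ℝ) : (ℝ × ℝ) →ₗ[ℝ] (ℝ × ℝ) where
  toFun p := (p.1 * u.1 + p.2 * v.1, p.1 * u.2 + p.2 * v.2)
  map_add' p q := by ext <;> simp <;> ring
  map_smul' c p := by ext <;> simp <;> ring

theorem Lmap_det (u v : ℝ × ℝ) : LinearMap.det (Lmap u v) = u.1 * v.2 - u.2 * v.1 := by
  rw [← LinearMap.det_toMatrix (Module.Basis.finTwoProd ℝ)]
  rw [Matrix.det_fin_two]
  simp [LinearMap.toMatrix_apply, Lmap]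
  ring

theorem T_volume (Av u v : ℝ × ℝ) :
    volume ((Av + ·) '' (Lmap u v '' Tri)) = ENNReal.ofReal (|u.1 * v.2 - u.2 * v.1| / 2) := by
  rw [Set.image_add_left, measure_preimage_add]
  rw [Measure.addHaar_image_linearMap, Lmap_det, tri_volume, ← ENNReal.ofReal_mul (abs_nonneg _)]
  rw [mul_one_div]

theorem stmt_1 (a b c : ℤ × ℤ)
    (A B C : ℝ × ℝ)
    (hA : A = ((a.1 : ℝ), (a.2 : ℝ))) (hB : B = ((b.1 : ℝ), (b.2 : ℝ)))
    (hC : C = ((c.1 : ℝ), (c.2 : ℝ)))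
    (hnd : ¬ Collinear ℝ ({A, B, C} : Set (ℝ × ℝ)))
    (T : Set (ℝ × ℝ)) (hT : T = convexHull ℝ ({A, B, C} : Set (ℝ × ℝ))) :
    1 / 2 < (volume T).toReal ↔
      ∃ p : ℤ × ℤ, ((p.1 : ℝ), (p.2 : ℝ)) ∈ T ∧ p ≠ a ∧ p ≠ b ∧ p ≠ c := by
  set D : ℤ := (b.1 - a.1) * (c.2 - a.2) - (b.2 - a.2) * (c.1 - a.1) with hDdef
  -- D ≠ 0
  have hD : D ≠ 0 := by
    intro h0
    apply hnd
    apply collinear_of_det_zero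
    rw [hA, hB, hC]
    push_cast
    have : ((D : ℝ)) = 0 := by exact_mod_cast congrArg (Int.cast : ℤ → ℝ) h0
    push_cast [hDdef] at this
    linarith [this]
  have hDr : ((D : ℝ)) ≠ 0 := Int.cast_ne_zero.mpr hD
  -- membership characterization
  have memT : ∀ x : ℝ × ℝ, x ∈ T ↔ ∃ β γ : ℝ, 0 ≤ β ∧ 0 ≤ γ ∧ β + γ ≤ 1 ∧
      x.1 = (a.1 : ℝ) + β * ((b.1 : ℝ) - a.1) + γ * ((c.1 : ℝ) - a.1) ∧
      x.2 = (a.2 : ℝ) + β * ((b.2 : ℝ) - a.2) + γ * ((c.2 : ℝ) - a.2) := by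
    intro x
    rw [hT, mem_tri]
    constructor
    · rintro ⟨β, γ, h1, h2, h3, rfl⟩
      refine ⟨β, γ, h1, h2, h3, ?_, ?_⟩ <;> simp [hA, hB, hC] <;> ring
    · rintro ⟨β, γ, h1, h2, h3, hx1, hx2⟩
      refine ⟨β, γ, h1, h2, h3, ?_⟩
      ext
      · simpa [hA, hB, hC, hx1] using by ring
      · simpa [hA, hB, hC, hx2] using by ring
  -- volume of T
  have hvol : volume T = ENNReal.ofReal (|(D : ℝ)| / 2) := by
    have himg : T = (A + ·) '' (Lmap (B - A) (C - A) '' Tri) := by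
      ext x
      rw [memT x]
      constructor
      · rintro ⟨β, γ, h1, h2, h3, hx1, hx2⟩
        refine ⟨Lmap (B - A) (C - A) (β, γ), ⟨(β, γ), ⟨h1, h2, h3⟩, rfl⟩, ?_⟩
        ext
        · simp [Lmap, hA, hB, hC, hx1]; ring
        · simp [Lmap, hA, hB, hC, hx2]; ring
      · rintro ⟨y, ⟨p, ⟨h1, h2, h3⟩, rfl⟩, rfl⟩
        refine ⟨p.1, p.2, h1, h2, h3, ?_, ?_⟩ <;> simp [Lmap, hA, hB, hC] <;> ring
    rw [himg, T_volume]
    congr 2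
    rw [hA, hB, hC, hDdef]
    simp only [Prod.fst_sub, Prod.snd_sub, Prod.fst_add, Prod.snd_add, Prod.fst_neg,
      Prod.snd_neg]
    push_cast
    ring
  have hvol' : (volume T).toReal = |(D : ℝ)| / 2 := by
    rw [hvol, ENNReal.toReal_ofReal (by positivity)]
  -- reduce to |D| ≥ 2
  have hiff : 1 / 2 < (volume T).toReal ↔ 2 ≤ |D| := by
    rw [hvol']
    rw [show |(D : ℝ)| = ((|D| : ℤ) : ℝ) by push_cast; ring]
    constructor
    · intro h
      have : (1 : ℝ) < ((|D| : ℤ) : ℝ) := by linarith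
      have : (1 : ℤ) < |D| := by exact_mod_cast this
      omega
    · intro h
      have : (2 : ℝ) ≤ ((|D| : ℤ) : ℝ) := by exact_mod_cast h
      linarith
  rw [hiff]
  constructor
  · -- |D| ≥ 2 → extra lattice point
    intro h2
    have hDr' : (D : ℝ) = ((b.1:ℝ) - a.1) * ((c.2:ℝ) - a.2) - ((b.2:ℝ) - a.2) * ((c.1:ℝ) - a.1) := by
      rw [hDdef]; push_cast; ring
    have uniq : ∀ x y : ℝ, x * ((b.1:ℝ) - a.1) + y * ((c.1:ℝ) - a.1) = 0 →
        x * ((b.2:ℝ) - a.2) + y * ((c.2:ℝ) - a.2) = 0 → x = 0 ∧ y = 0 := by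
      intro x y h1' h2'
      have hx : x * (D : ℝ) = 0 := by
        rw [hDr']
        linear_combination ((c.2:ℝ) - a.2) * h1' - ((c.1:ℝ) - a.1) * h2'
      have hy : y * (D : ℝ) = 0 := by
        rw [hDr']
        linear_combination ((b.1:ℝ) - a.1) * h2' - ((b.2:ℝ) - a.2) * h1'
      exact ⟨(mul_eq_zero.mp hx).resolve_right hDr, (mul_eq_zero.mp hy).resolve_right hDr⟩
    have hex : ∃ r : ℤ × ℤ, ∀ m n : ℤ,
        ¬(r.1 = m * (b.1 - a.1) + n * (c.1 - a.1) ∧ r.2 = m * (b.2 - a.2) + n * (c.2 - a.2)) := by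
      by_contra hall
      push_neg at hall
      obtain ⟨m1, n1, e11, e12⟩ := hall (1, 0)
      obtain ⟨m2, n2, e21, e22⟩ := hall (0, 1)
      simp only [Prod.fst, Prod.snd] at e11 e12 e21 e22
      have key : (m1 * n2 - n1 * m2) * D = 1 := by
        rw [hDdef]
        linear_combination (-(m2 * (b.2 - a.2) + n2 * (c.2 - a.2))) * e11 - e22 +
          (m2 * (b.1 - a.1) + n2 * (c.1 - a.1)) * e12
      have hdvd : D ∣ 1 := ⟨m1 * n2 - n1 * m2, by linarith [key]⟩
      have := Int.isUnit_iff.mp (isUnit_of_dvd_one hdvd)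
      rcases this with h | h <;> rw [h] at h2 <;> simp at h2 <;> omega
    obtain ⟨r, hr⟩ := hex
    obtain ⟨β, γ, hr1, hr2⟩ : ∃ β γ : ℝ,
        (r.1 : ℝ) = β * ((b.1:ℝ) - a.1) + γ * ((c.1:ℝ) - a.1) ∧
        (r.2 : ℝ) = β * ((b.2:ℝ) - a.2) + γ * ((c.2:ℝ) - a.2) := by
      refine ⟨((r.1:ℝ) * ((c.2:ℝ) - a.2) - (r.2:ℝ) * ((c.1:ℝ) - a.1)) / D,
        (((b.1:ℝ) - a.1) * (r.2:ℝ) - ((b.2:ℝ) - a.2) * (r.1:ℝ)) / D, ?_, ?_⟩ <;>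
      · field_simp
        rw [hDr']
        ring
    set m : ℤ := ⌊β⌋ with hmdef
    set n : ℤ := ⌊γ⌋ with hndef
    have hβ0 : 0 ≤ β - m := by linarith [Int.floor_le β]
    have hβ1 : β - m < 1 := by linarith [Int.lt_floor_add_one β]
    have hγ0 : 0 ≤ γ - n := by linarith [Int.floor_le γ]
    have hγ1 : γ - n < 1 := by linarith [Int.lt_floor_add_one γ]
    obtain ⟨q1, q2, hq1, hq2⟩ : ∃ q1 q2 : ℤ,
        (q1 : ℝ) = (β - m) * ((b.1:ℝ) - a.1) + (γ - n) * ((c.1:ℝ) - a.1) ∧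
        (q2 : ℝ) = (β - m) * ((b.2:ℝ) - a.2) + (γ - n) * ((c.2:ℝ) - a.2) := by
      refine ⟨r.1 - m * (b.1 - a.1) - n * (c.1 - a.1),
        r.2 - m * (b.2 - a.2) - n * (c.2 - a.2), ?_, ?_⟩
      · push_cast
        linear_combination hr1
      · push_cast
        linear_combination hr2
    have hne : ¬(β - (m:ℝ) = 0 ∧ γ - (n:ℝ) = 0) := by
      rintro ⟨h1', h2'⟩
      refine hr m n ⟨?_, ?_⟩
      · have : (r.1 : ℝ) = (m:ℝ) * ((b.1:ℝ) - a.1) + (n:ℝ) * ((c.1:ℝ) - a.1) := by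
          rw [hr1]; linear_combination ((b.1:ℝ) - a.1) * h1' + ((c.1:ℝ) - a.1) * h2'
        exact_mod_cast this
      · have : (r.2 : ℝ) = (m:ℝ) * ((b.2:ℝ) - a.2) + (n:ℝ) * ((c.2:ℝ) - a.2) := by
          rw [hr2]; linear_combination ((b.2:ℝ) - a.2) * h1' + ((c.2:ℝ) - a.2) * h2'
        exact_mod_cast this
    by_cases hsum : (β - m) + (γ - n) ≤ 1
    · refine ⟨(a.1 + q1, a.2 + q2), ?_, ?_, ?_, ?_⟩
      · rw [memT]
        refine ⟨β - m, γ - n, hβ0, hγ0, hsum, ?_, ?_⟩ <;>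
        · push_cast
          first
          | linear_combination hq1
          | linear_combination hq2
          | linear_combination -hq1
          | linear_combination -hq2
      · intro hpe
        have e1 : a.1 + q1 = a.1 := congrArg Prod.fst hpe
        have e2 : a.2 + q2 = a.2 := congrArg Prod.snd hpe
        have g1 : (q1 : ℝ) = 0 := by exact_mod_cast congrArg (Int.cast : ℤ → ℝ) (by omega : q1 = 0)
        have g2 : (q2 : ℝ) = 0 := by exact_mod_cast congrArg (Int.cast : ℤ → ℝ) (by omega : q2 = 0)
        exact hne (uniq _ _ (by linarith [hq1, g1]) (by linarith [hq2, g2]))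
      · intro hpe
        have e1 : a.1 + q1 = b.1 := congrArg Prod.fst hpe
        have e2 : a.2 + q2 = b.2 := congrArg Prod.snd hpe
        have g1 : (q1 : ℝ) = (b.1:ℝ) - a.1 := by
          have : q1 = b.1 - a.1 := by omega
          rw [this]; push_cast; ring
        have g2 : (q2 : ℝ) = (b.2:ℝ) - a.2 := by
          have : q2 = b.2 - a.2 := by omega
          rw [this]; push_cast; ring
        have := uniq (β - m - 1) (γ - n) (by linarith [hq1, g1]) (by linarith [hq2, g2])
        linarith [this.1]
      · intro hpe
        have e1 : a.1 + q1 = c.1 := congrArg Prod.fst hpe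
        have e2 : a.2 + q2 = c.2 := congrArg Prod.snd hpe
        have g1 : (q1 : ℝ) = (c.1:ℝ) - a.1 := by
          have : q1 = c.1 - a.1 := by omega
          rw [this]; push_cast; ring
        have g2 : (q2 : ℝ) = (c.2:ℝ) - a.2 := by
          have : q2 = c.2 - a.2 := by omega
          rw [this]; push_cast; ring
        have := uniq (β - m) (γ - n - 1) (by linarith [hq1, g1]) (by linarith [hq2, g2])
        linarith [this.2]
    · push_neg at hsum
      refine ⟨(b.1 + c.1 - a.1 - q1, b.2 + c.2 - a.2 - q2), ?_, ?_, ?_, ?_⟩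
      · rw [memT]
        refine ⟨1 - (β - m), 1 - (γ - n), by linarith, by linarith, by linarith, ?_, ?_⟩ <;>
        · push_cast
          first
          | linear_combination hq1
          | linear_combination hq2
          | linear_combination -hq1
          | linear_combination -hq2
      · intro hpe
        have e1 : b.1 + c.1 - a.1 - q1 = a.1 := congrArg Prod.fst hpe
        have e2 : b.2 + c.2 - a.2 - q2 = a.2 := congrArg Prod.snd hpe
        have g1 : (q1 : ℝ) = ((b.1:ℝ) - a.1) + ((c.1:ℝ) - a.1) := by
          have : q1 = (b.1 - a.1) + (c.1 - a.1) := by omega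
          rw [this]; push_cast; ring
        have g2 : (q2 : ℝ) = ((b.2:ℝ) - a.2) + ((c.2:ℝ) - a.2) := by
          have : q2 = (b.2 - a.2) + (c.2 - a.2) := by omega
          rw [this]; push_cast; ring
        have := uniq (β - m - 1) (γ - n - 1) (by linarith [hq1, g1]) (by linarith [hq2, g2])
        linarith [this.1]
      · intro hpe
        have e1 : b.1 + c.1 - a.1 - q1 = b.1 := congrArg Prod.fst hpe
        have e2 : b.2 + c.2 - a.2 - q2 = b.2 := congrArg Prod.snd hpe
        have g1 : (q1 : ℝ) = (c.1:ℝ) - a.1 := by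
          have : q1 = c.1 - a.1 := by omega
          rw [this]; push_cast; ring
        have g2 : (q2 : ℝ) = (c.2:ℝ) - a.2 := by
          have : q2 = c.2 - a.2 := by omega
          rw [this]; push_cast; ring
        have := uniq (β - m) (γ - n - 1) (by linarith [hq1, g1]) (by linarith [hq2, g2])
        linarith [this.2]
      · intro hpe
        have e1 : b.1 + c.1 - a.1 - q1 = c.1 := congrArg Prod.fst hpe
        have e2 : b.2 + c.2 - a.2 - q2 = c.2 := congrArg Prod.snd hpe
        have g1 : (q1 : ℝ) = (b.1:ℝ) - a.1 := by
          have : q1 = b.1 - a.1 := by omega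
          rw [this]; push_cast; ring
        have g2 : (q2 : ℝ) = (b.2:ℝ) - a.2 := by
          have : q2 = b.2 - a.2 := by omega
          rw [this]; push_cast; ring
        have := uniq (β - m - 1) (γ - n) (by linarith [hq1, g1]) (by linarith [hq2, g2])
        linarith [this.1]
  · -- extra lattice point → |D| ≥ 2
    rintro ⟨p, hp, hpa, hpb, hpc⟩
    rw [memT] at hp
    obtain ⟨β, γ, h1, h2, h3, hx1, hx2⟩ := hp
    simp only at hx1 hx2
    set m : ℤ := (p.1 - a.1) * (c.2 - a.2) - (p.2 - a.2) * (c.1 - a.1) with hm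
    set n : ℤ := (b.1 - a.1) * (p.2 - a.2) - (b.2 - a.2) * (p.1 - a.1) with hn
    have hDr' : (D : ℝ) = ((b.1:ℝ) - a.1) * ((c.2:ℝ) - a.2) - ((b.2:ℝ) - a.2) * ((c.1:ℝ) - a.1) := by
      rw [hDdef]; push_cast; ring
    have hmr : (m : ℝ) = ((p.1:ℝ) - a.1) * ((c.2:ℝ) - a.2) - ((p.2:ℝ) - a.2) * ((c.1:ℝ) - a.1) := by
      rw [hm]; push_cast; ring
    have hnr : (n : ℝ) = ((b.1:ℝ) - a.1) * ((p.2:ℝ) - a.2) - ((b.2:ℝ) - a.2) * ((p.1:ℝ) - a.1) := by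
      rw [hn]; push_cast; ring
    have hβD : β * (D : ℝ) = (m : ℝ) := by
      rw [hDr', hmr]
      linear_combination ((c.1 : ℝ) - a.1) * hx2 - ((c.2 : ℝ) - a.2) * hx1
    have hγD : γ * (D : ℝ) = (n : ℝ) := by
      rw [hDr', hnr]
      linear_combination ((b.2 : ℝ) - a.2) * hx1 - ((b.1 : ℝ) - a.1) * hx2
    by_contra hlt
    push_neg at hlt
    have hb := abs_lt.mp hlt
    have hD1 : D = 1 ∨ D = -1 := by omega
    -- β and γ are integer casts
    obtain ⟨k, hk⟩ : ∃ k : ℤ, β = (k : ℝ) := by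
      rcases hD1 with h | h
      · exact ⟨m, by rw [h] at hβD; simpa using hβD⟩
      · refine ⟨-m, ?_⟩
        rw [h] at hβD
        push_cast at hβD ⊢
        linarith
    obtain ⟨l, hl⟩ : ∃ l : ℤ, γ = (l : ℝ) := by
      rcases hD1 with h | h
      · exact ⟨n, by rw [h] at hγD; simpa using hγD⟩
      · refine ⟨-n, ?_⟩
        rw [h] at hγD
        push_cast at hγD ⊢
        linarith
    rw [hk] at h1 h3 hx1 hx2
    rw [hl] at h2 h3 hx1 hx2
    have hk0 : 0 ≤ k := by exact_mod_cast h1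
    have hl0 : 0 ≤ l := by exact_mod_cast h2
    have hkl : k + l ≤ 1 := by exact_mod_cast h3
    have hcases : (k = 0 ∧ l = 0) ∨ (k = 0 ∧ l = 1) ∨ (k = 1 ∧ l = 0) := by omega
    rcases hcases with ⟨rfl, rfl⟩ | ⟨rfl, rfl⟩ | ⟨rfl, rfl⟩
    · -- k = 0, l = 0 : p = a
      apply hpa
      have e1 : (p.1 : ℝ) = (a.1 : ℝ) := by push_cast at hx1 ⊢; linarith
      have e2 : (p.2 : ℝ) = (a.2 : ℝ) := by push_cast at hx2 ⊢; linarith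
      ext <;> [exact_mod_cast e1; exact_mod_cast e2]
    · -- k = 0, l = 1 : p = c
      apply hpc
      have e1 : (p.1 : ℝ) = (c.1 : ℝ) := by push_cast at hx1 ⊢; linarith
      have e2 : (p.2 : ℝ) = (c.2 : ℝ) := by push_cast at hx2 ⊢; linarith
      ext <;> [exact_mod_cast e1; exact_mod_cast e2]
    · -- k = 1, l = 0 : p = b
      apply hpb
      have e1 : (p.1 : ℝ) = (b.1 : ℝ) := by push_cast at hx1 ⊢; linarith
      have e2 : (p.2 : ℝ) = (b.2 : ℝ) := by push_cast at hx2 ⊢; linarith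
      ext <;> [exact_mod_cast e1; exact_mod_cast e2]
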